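/- arXiv:2104.12917 — 4 statements merged into one kernel-verified Lean document; each statement's English description precedes it below -/
import Mathlib

section
/- For every additive map x : Q → ℝ and all real numbers r, s, the Moy–Prasad subspaces of the loop algebra satisfy [𝔨_{x,r}, 𝔨_{x,s}] ⊆ 𝔨_{x,r+s} and [𝔨_{x,r}, 𝔨_{x,s+}] ⊆ 𝔨_{x,(r+s)+}. In particular, for r ≥ 0 both 𝔨_{x,r} and 𝔨_{x,r+} are Lie subalgebras of 𝔤((t)). -/
open HahnSeries

section LoopAlgebra

variable (k : Type*) [Field k]
variable (g : Type*) [LieRing g] [LieAlgebra k g]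

/-- `g` viewed as a (nonunital, nonassociative) ring with multiplication the Lie bracket;
this induces the natural multiplication on `HahnSeries ℤ g = 𝔤((t))` given by
`[a ⊗ f, b ⊗ g] = [a,b] ⊗ fg`. -/
noncomputable instance lieRingAsRing : NonUnitalNonAssocRing g :=
  { (inferInstance : AddCommGroup g) with
    mul := fun a b => ⁅a, b⁆
    left_distrib := fun a b c => lie_add a b c
    right_distrib := fun a b c => add_lie a b c
    zero_mul := fun a => zero_lie a
    mul_zero := fun a => lie_zero a }

variable {Q : Type*} [AddCommGroup Q]

variable {k g}

/-- The Moy–Prasad subspace `𝔨_{x,r}` of the loop algebra `𝔤((t)) = HahnSeries ℤ 𝔤`: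
those `v` each of whose `t^i`-coefficients lies in the span of the root spaces `G α`
with `x α + i ≥ r`. -/
noncomputable def MP (G : Q → Submodule k g) (x : Q →+ ℝ) (r : ℝ) :
    Submodule k (HahnSeries ℤ g) where
  carrier := {v | ∀ i : ℤ, v.coeff i ∈ ⨆ α ∈ {α : Q | r ≤ x α + i}, G α}
  zero_mem' := by intro i; simp
  add_mem' := by
    intro a b ha hb i
    rw [HahnSeries.coeff_add]
    exact add_mem (ha i) (hb i)
  smul_mem' := by
    intro c a ha i
    rw [HahnSeries.coeff_smul]
    exact Submodule.smul_mem _ _ (ha i)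

/-- The Moy–Prasad subspace `𝔨_{x,r+}`, with strict inequality. -/
noncomputable def MPplus (G : Q → Submodule k g) (x : Q →+ ℝ) (r : ℝ) :
    Submodule k (HahnSeries ℤ g) where
  carrier := {v | ∀ i : ℤ, v.coeff i ∈ ⨆ α ∈ {α : Q | r < x α + i}, G α}
  zero_mem' := by intro i; simp
  add_mem' := by
    intro a b ha hb i
    rw [HahnSeries.coeff_add]
    exact add_mem (ha i) (hb i)
  smul_mem' := by
    intro c a ha i
    rw [HahnSeries.coeff_smul]
    exact Submodule.smul_mem _ _ (ha i)

end LoopAlgebra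


section AuxLemmas

variable {k : Type*} [Field k] {g : Type*} [LieRing g] [LieAlgebra k g]
variable {Q : Type*} [AddCommGroup Q]

lemma aux_bracket (G : Q → Submodule k g)
    (hbr : ∀ (α β : Q) (a b : g), a ∈ G α → b ∈ G β → ⁅a, b⁆ ∈ G (α + β))
    {S T U : Set Q} (h : ∀ α ∈ S, ∀ β ∈ T, α + β ∈ U)
    {a b : g} (ha : a ∈ ⨆ α ∈ S, G α) (hb : b ∈ ⨆ β ∈ T, G β) :
    ⁅a, b⁆ ∈ ⨆ γ ∈ U, G γ := by
  rw [iSup_subtype'] at ha hb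
  refine Submodule.iSup_induction _ (motive := fun a => ⁅a, b⁆ ∈ ⨆ γ ∈ U, G γ) ha ?_ (by simp) ?_
  · rintro ⟨α, hα⟩ a' ha'
    refine Submodule.iSup_induction _ (motive := fun b => ⁅a', b⁆ ∈ ⨆ γ ∈ U, G γ) hb ?_ (by simp) ?_
    · rintro ⟨β, hβ⟩ b' hb'
      exact le_biSup G (h α hα β hβ) (hbr α β a' b' ha' hb')
    · intro y z hy hz
      rw [lie_add]
      exact add_mem hy hz
  · intro y z hy hz
    rw [add_lie]
    exact add_mem hy hz

lemma aux_mul_coeff (G : Q → Submodule k g)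
    (hbr : ∀ (α β : Q) (a b : g), a ∈ G α → b ∈ G β → ⁅a, b⁆ ∈ G (α + β))
    {S T : ℤ → Set Q} {U : Set Q} {i : ℤ}
    (h : ∀ j l : ℤ, j + l = i → ∀ α ∈ S j, ∀ β ∈ T l, α + β ∈ U)
    {v w : HahnSeries ℤ g}
    (hv : ∀ j : ℤ, v.coeff j ∈ ⨆ α ∈ S j, G α)
    (hw : ∀ j : ℤ, w.coeff j ∈ ⨆ β ∈ T j, G β) :
    (v * w).coeff i ∈ ⨆ γ ∈ U, G γ := by
  rw [HahnSeries.coeff_mul]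
  refine Submodule.sum_mem _ ?_
  intro ij hij
  rw [Finset.mem_addAntidiagonal] at hij
  show ⁅v.coeff ij.1, w.coeff ij.2⁆ ∈ _
  exact aux_bracket G hbr (h ij.1 ij.2 hij.2.2) (hv ij.1) (hw ij.2)

lemma MP_mono (G : Q → Submodule k g) (x : Q →+ ℝ) {r r' : ℝ} (h : r' ≤ r) :
    MP G x r ≤ MP G x r' := by
  intro v hv i
  exact biSup_mono (f := G) (fun α (hα : r ≤ x α + i) => h.trans hα) (hv i)

lemma MPplus_mono (G : Q → Submodule k g) (x : Q →+ ℝ) {r r' : ℝ} (h : r' ≤ r) :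
    MPplus G x r ≤ MPplus G x r' := by
  intro v hv i
  exact biSup_mono (f := G) (fun α (hα : r < x α + i) => h.trans_lt hα) (hv i)

lemma MPplus_le_MP (G : Q → Submodule k g) (x : Q →+ ℝ) (r : ℝ) :
    MPplus G x r ≤ MP G x r := by
  intro v hv i
  exact biSup_mono (f := G) (fun α (hα : r < x α + i) => hα.le) (hv i)

end AuxLemmas

/-- For every additive `x : Q → ℝ` and all reals `r, s`, the Moy–Prasad
subspaces of the loop algebra `𝔤((t)) = HahnSeries ℤ 𝔤` (whose Lie bracket is the
multiplication `v * w` induced by `[a ⊗ f, b ⊗ g] = [a,b] ⊗ fg`) satisfy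
`[𝔨_{x,r}, 𝔨_{x,s}] ⊆ 𝔨_{x,r+s}` and `[𝔨_{x,r}, 𝔨_{x,s+}] ⊆ 𝔨_{x,(r+s)+}`; in particular,
for `r ≥ 0` both `𝔨_{x,r}` and `𝔨_{x,r+}` are closed under the bracket, i.e. are Lie
subalgebras of `𝔤((t))` (they are `k`-subspaces by construction). -/
theorem moy_prasad_bracket
    {k : Type*} [Field k] {g : Type*} [LieRing g] [LieAlgebra k g]
    {Q : Type*} [AddCommGroup Q] [DecidableEq Q]
    (Φ : Finset Q) (hΦ : (0 : Q) ∉ Φ)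
    (G : Q → Submodule k g)
    (hsupp : ∀ α : Q, α ∉ Φ → α ≠ 0 → G α = ⊥)
    (hdec : DirectSum.IsInternal G)
    (hbr : ∀ (α β : Q) (a b : g), a ∈ G α → b ∈ G β → ⁅a, b⁆ ∈ G (α + β))
    (x : Q →+ ℝ) (r s : ℝ) :
    (∀ v ∈ MP G x r, ∀ w ∈ MP G x s, v * w ∈ MP G x (r + s)) ∧
    (∀ v ∈ MP G x r, ∀ w ∈ MPplus G x s, v * w ∈ MPplus G x (r + s)) ∧
    (0 ≤ r →
      (∀ v ∈ MP G x r, ∀ w ∈ MP G x r, v * w ∈ MP G x r) ∧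
      (∀ v ∈ MPplus G x r, ∀ w ∈ MPplus G x r, v * w ∈ MPplus G x r)) := by
  have h1 : ∀ r s : ℝ, ∀ v ∈ MP G x r, ∀ w ∈ MP G x s, v * w ∈ MP G x (r + s) := by
    intro r s v hv w hw i
    refine aux_mul_coeff G hbr ?_ hv hw
    intro j l hjl α hα β hβ
    simp only [Set.mem_setOf_eq] at *
    rw [map_add]
    subst hjl
    push_cast
    linarith
  have h2 : ∀ r s : ℝ, ∀ v ∈ MP G x r, ∀ w ∈ MPplus G x s, v * w ∈ MPplus G x (r + s) := by
    intro r s v hv w hw i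
    refine aux_mul_coeff G hbr ?_ hv hw
    intro j l hjl α hα β hβ
    simp only [Set.mem_setOf_eq] at *
    rw [map_add]
    subst hjl
    push_cast
    linarith
  refine ⟨h1 r s, h2 r s, fun hr => ⟨?_, ?_⟩⟩
  · intro v hv w hw
    exact MP_mono G x (by linarith) (h1 r r v hv w hw)
  · intro v hv w hw
    exact MPplus_mono G x (by linarith)
      (h2 r r v (MPplus_le_MP G x r hv) w hw)
end

section
/- Let Φ be a finite subset of ℚ^n, viewed as linear functionals on ℝ^n via the standard pairing. For a subset A ⊆ Φ × ℤ define S_A = {(x, r) ∈ ℝ^n × ℝ : r ≥ 0 and, for all (α, i) ∈ Φ × ℤ, one has ⟨α, x⟩ + i > r if and only if (α, i) ∈ A}. If S_A is nonempty, then the infimum of the set {r ∈ ℝ : there exists x ∈ ℝ^n with (x, r) ∈ S_A} is a rational number. -/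
namespace MPaux

structure Ineq (k : ℕ) where
  c : Fin k → ℚ
  d : ℚ

def Ineq.holds {k : ℕ} (e : Ineq k) (y : Fin k → ℝ) : Prop :=
  (∑ j, (e.c j : ℝ) * y j) ≤ (e.d : ℝ)

def Sf {k : ℕ} (e : Ineq (k + 1)) (y : Fin k → ℝ) : ℝ :=
  ∑ j, (e.c j.castSucc : ℝ) * y j

def restrictI {k : ℕ} (e : Ineq (k + 1)) : Ineq k :=
  ⟨fun j => e.c j.castSucc, e.d⟩

def combineI {k : ℕ} (p q : Ineq (k + 1)) : Ineq k :=
  ⟨fun j => -q.c (Fin.last k) * p.c j.castSucc + p.c (Fin.last k) * q.c j.castSucc,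
   -q.c (Fin.last k) * p.d + p.c (Fin.last k) * q.d⟩

def elimL {k : ℕ} (L : List (Ineq (k + 1))) : List (Ineq k) :=
  (L.filter (fun e => e.c (Fin.last k) = 0)).map restrictI ++
  (L ×ˢ L).filterMap
    (fun pq => if 0 < pq.1.c (Fin.last k) ∧ pq.2.c (Fin.last k) < 0
      then some (combineI pq.1 pq.2) else none)

lemma holds_snoc {k : ℕ} (e : Ineq (k + 1)) (y : Fin k → ℝ) (t : ℝ) :
    e.holds (Fin.snoc y t) ↔ Sf e y + (e.c (Fin.last k) : ℝ) * t ≤ (e.d : ℝ) := by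
  unfold Ineq.holds Sf
  rw [Fin.sum_univ_castSucc]
  simp [Fin.snoc_castSucc, Fin.snoc_last]

lemma restrict_holds {k : ℕ} (e : Ineq (k + 1)) (y : Fin k → ℝ) :
    (restrictI e).holds y ↔ Sf e y ≤ (e.d : ℝ) := Iff.rfl

lemma combine_holds {k : ℕ} (p q : Ineq (k + 1)) (y : Fin k → ℝ) :
    (combineI p q).holds y ↔
      (-(q.c (Fin.last k)) : ℝ) * Sf p y + (p.c (Fin.last k) : ℝ) * Sf q y ≤
        (-(q.c (Fin.last k)) : ℝ) * (p.d : ℝ) + (p.c (Fin.last k) : ℝ) * (q.d : ℝ) := by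
  unfold Ineq.holds combineI Sf
  push_cast
  rw [Finset.mul_sum, Finset.mul_sum, ← Finset.sum_add_distrib]
  simp only [add_mul, mul_assoc]

-- fold helpers
lemma le_foldr_max {l : List ℝ} {a : ℝ} (b : ℝ) (h : a ∈ l) : a ≤ l.foldr max b := by
  induction l with
  | nil => simp at h
  | cons x xs ih =>
    rcases List.mem_cons.1 h with rfl | h
    · exact le_max_left _ _
    · exact (ih h).trans (le_max_right _ _)

lemma foldr_max_le {l : List ℝ} {b u : ℝ} (hb : b ≤ u) (h : ∀ a ∈ l, a ≤ u) :
    l.foldr max b ≤ u := by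
  induction l with
  | nil => exact hb
  | cons x xs ih =>
    exact max_le (h x (by simp)) (ih (fun a ha => h a (by simp [ha])))

lemma foldr_min_le {l : List ℝ} {a : ℝ} (b : ℝ) (h : a ∈ l) : l.foldr min b ≤ a := by
  induction l with
  | nil => simp at h
  | cons x xs ih =>
    rcases List.mem_cons.1 h with rfl | h
    · exact min_le_left _ _
    · exact (min_le_right _ _).trans (ih h)

lemma exists_between (lows ups : List ℝ) (h : ∀ l ∈ lows, ∀ u ∈ ups, l ≤ u) :
    ∃ t : ℝ, (∀ l ∈ lows, l ≤ t) ∧ (∀ u ∈ ups, t ≤ u) := by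
  cases lows with
  | nil => exact ⟨ups.foldr min 0, by simp, fun u hu => foldr_min_le 0 hu⟩
  | cons l0 ls =>
    refine ⟨(l0 :: ls).foldr max l0, fun l hl => le_foldr_max l0 hl, fun u hu => ?_⟩
    exact foldr_max_le (h l0 (by simp) u hu) (fun a ha => h a ha u hu)

theorem elim_correct {k : ℕ} (L : List (Ineq (k + 1))) (y : Fin k → ℝ) :
    (∀ e ∈ elimL L, e.holds y) ↔ ∃ t : ℝ, ∀ e ∈ L, e.holds (Fin.snoc y t) := by
  constructor
  · intro H
    set lows : List ℝ :=
      (L.filter (fun q => q.c (Fin.last k) < 0)).map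
        (fun q => ((q.d : ℝ) - Sf q y) / (q.c (Fin.last k) : ℝ)) with hlows
    set ups : List ℝ :=
      (L.filter (fun p => 0 < p.c (Fin.last k))).map
        (fun p => ((p.d : ℝ) - Sf p y) / (p.c (Fin.last k) : ℝ)) with hups
    have hpair : ∀ l ∈ lows, ∀ u ∈ ups, l ≤ u := by
      intro l hl u hu
      rw [hlows, List.mem_map] at hl
      obtain ⟨q, hq, rfl⟩ := hl
      rw [List.mem_filter, decide_eq_true_eq] at hq
      rw [hups, List.mem_map] at hu
      obtain ⟨p, hp, rfl⟩ := hu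
      rw [List.mem_filter, decide_eq_true_eq] at hp
      have hmem : combineI p q ∈ elimL L := by
        apply List.mem_append_right
        rw [List.mem_filterMap]
        exact ⟨(p, q), List.mem_product.2 ⟨hp.1, hq.1⟩, by simp [hp.2, hq.2]⟩
      have hc := (combine_holds p q y).1 (H _ hmem)
      have haq : ((q.c (Fin.last k) : ℝ)) < 0 := by exact_mod_cast hq.2
      have hap : (0 : ℝ) < (p.c (Fin.last k) : ℝ) := by exact_mod_cast hp.2
      have hrw : ((q.d : ℝ) - Sf q y) / (q.c (Fin.last k) : ℝ) =
          (Sf q y - (q.d : ℝ)) / (-(q.c (Fin.last k) : ℝ)) := by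
        rw [div_neg]; ring_nf
      rw [hrw, div_le_div_iff₀ (by linarith) hap]
      nlinarith [hc]
    obtain ⟨t, htl, htu⟩ := exists_between lows ups hpair
    refine ⟨t, fun e he => ?_⟩
    rw [holds_snoc]
    rcases lt_trichotomy (e.c (Fin.last k)) 0 with hc0 | hc0 | hc0
    · have hmem : ((e.d : ℝ) - Sf e y) / (e.c (Fin.last k) : ℝ) ∈ lows := by
        rw [hlows, List.mem_map]
        exact ⟨e, List.mem_filter.2 ⟨he, by simp [hc0]⟩, rfl⟩
      have hle := htl _ hmem
      have ha : ((e.c (Fin.last k) : ℝ)) < 0 := by exact_mod_cast hc0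
      have h2 : (e.c (Fin.last k) : ℝ) * t ≤
          (e.c (Fin.last k) : ℝ) * (((e.d : ℝ) - Sf e y) / (e.c (Fin.last k) : ℝ)) :=
        mul_le_mul_of_nonpos_left hle (le_of_lt ha)
      rw [mul_div_cancel₀ _ (ne_of_lt ha)] at h2
      linarith
    · have ha : ((e.c (Fin.last k) : ℝ)) = 0 := by exact_mod_cast hc0
      have hmem : restrictI e ∈ elimL L := by
        apply List.mem_append_left
        exact List.mem_map_of_mem (List.mem_filter.2 ⟨he, by simp [hc0]⟩)
      have := H _ hmem
      rw [restrict_holds] at this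
      rw [ha]
      linarith
    · have hmem : ((e.d : ℝ) - Sf e y) / (e.c (Fin.last k) : ℝ) ∈ ups := by
        rw [hups, List.mem_map]
        exact ⟨e, List.mem_filter.2 ⟨he, by simp [hc0]⟩, rfl⟩
      have hle := htu _ hmem
      have ha : (0:ℝ) < ((e.c (Fin.last k) : ℝ)) := by exact_mod_cast hc0
      have h2 : (e.c (Fin.last k) : ℝ) * t ≤
          (e.c (Fin.last k) : ℝ) * (((e.d : ℝ) - Sf e y) / (e.c (Fin.last k) : ℝ)) :=
        mul_le_mul_of_nonneg_left hle (le_of_lt ha)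
      rw [mul_div_cancel₀ _ (ne_of_gt ha)] at h2
      linarith
  · rintro ⟨t, ht⟩ e he
    rw [elimL, List.mem_append] at he
    rcases he with he | he
    · rw [List.mem_map] at he
      obtain ⟨e', he', rfl⟩ := he
      rw [List.mem_filter, decide_eq_true_eq] at he'
      have := (holds_snoc e' y t).1 (ht _ he'.1)
      rw [restrict_holds]
      rw [he'.2] at this
      push_cast at this
      linarith
    · rw [List.mem_filterMap] at he
      obtain ⟨⟨p, q⟩, hpq, hval⟩ := he
      by_cases hcond : 0 < p.c (Fin.last k) ∧ q.c (Fin.last k) < 0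
      · rw [if_pos hcond] at hval
        obtain rfl : combineI p q = e := Option.some.inj hval
        rw [List.mem_product] at hpq
        have hp := (holds_snoc p y t).1 (ht _ hpq.1)
        have hq := (holds_snoc q y t).1 (ht _ hpq.2)
        have hap : (0:ℝ) < (p.c (Fin.last k) : ℝ) := by exact_mod_cast hcond.1
        have haq : ((q.c (Fin.last k) : ℝ)) < 0 := by exact_mod_cast hcond.2
        rw [combine_holds]
        nlinarith [hp, hq]
      · rw [if_neg hcond] at hval
        exact absurd hval (by simp)


theorem fm_exists : ∀ (k : ℕ) (L : List (Ineq (k + 1))),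
    ∃ L' : List (Ineq 1), ∀ r : ℝ,
      (∀ e ∈ L', e.holds ![r]) ↔ ∃ z : Fin (k + 1) → ℝ, z 0 = r ∧ ∀ e ∈ L, e.holds z := by
  intro k
  induction k with
  | zero =>
    intro L
    refine ⟨L, fun r => ⟨fun h => ⟨![r], rfl, h⟩, ?_⟩⟩
    rintro ⟨z, rfl, hz⟩ e he
    have hz' : ![z 0] = z := by
      funext i
      rw [Fin.eq_zero i]
      rfl
    rw [hz']
    exact hz e he
  | succ k ih =>
    intro L
    obtain ⟨L', hL'⟩ := ih (elimL L)
    refine ⟨L', fun r => (hL' r).trans ?_⟩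
    constructor
    · rintro ⟨z, rfl, hz⟩
      obtain ⟨t, ht⟩ := (elim_correct L z).1 hz
      refine ⟨Fin.snoc z t, ?_, ht⟩
      rw [← Fin.castSucc_zero, Fin.snoc_castSucc]
    · rintro ⟨w, rfl, hw⟩
      refine ⟨Fin.init w, ?_, (elim_correct L (Fin.init w)).2 ⟨w (Fin.last (k+1)), ?_⟩⟩
      · rfl
      · rw [Fin.snoc_init_self]
        exact hw


lemma holds_single (e : Ineq 1) (r : ℝ) : e.holds ![r] ↔ (e.c 0 : ℝ) * r ≤ (e.d : ℝ) := by
  simp [Ineq.holds, Fin.sum_univ_one]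

def lbQ (L : List (Ineq 1)) : ℚ :=
  L.foldr (fun e acc => if e.c 0 < 0 then max (e.d / e.c 0) acc else acc) 0

lemma lbQ_nonneg (L : List (Ineq 1)) : 0 ≤ lbQ L := by
  induction L with
  | nil => simp [lbQ]
  | cons e L ih =>
    rw [lbQ, List.foldr_cons]
    split
    · exact ih.trans (le_max_right _ _)
    · exact ih

lemma div_le_lbQ {L : List (Ineq 1)} {e : Ineq 1} (he : e ∈ L) (hc : e.c 0 < 0) :
    e.d / e.c 0 ≤ lbQ L := by
  induction L with
  | nil => simp at he
  | cons f L ih =>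
    rw [lbQ, List.foldr_cons]
    rcases List.mem_cons.1 he with rfl | he
    · rw [if_pos hc]
      exact le_max_left _ _
    · split
      · exact (ih he).trans (le_max_right _ _)
      · exact ih he

lemma lbQ_le {L : List (Ineq 1)} {r : ℝ} (hr : 0 ≤ r) (h : ∀ e ∈ L, e.holds ![r]) :
    ((lbQ L : ℚ) : ℝ) ≤ r := by
  induction L with
  | nil => simpa [lbQ] using hr
  | cons e L ih =>
    have ih' := ih (fun f hf => h f (List.mem_cons_of_mem _ hf))
    rw [lbQ, List.foldr_cons]
    split
    · rename_i hc
      push_cast [Rat.cast_max]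
      refine max_le ?_ ih'
      have he := (holds_single e r).1 (h e (by simp))
      have hcR : ((e.c 0 : ℚ) : ℝ) < 0 := by exact_mod_cast hc
      rw [div_le_iff_of_neg' hcR]
      exact he
    · exact ih'

theorem rat_sInf (L : List (Ineq 1)) (T : Set ℝ)
    (hT : ∀ r : ℝ, r ∈ T ↔ ∀ e ∈ L, e.holds ![r])
    (hne : T.Nonempty) (hpos : ∀ r ∈ T, 0 ≤ r) :
    ∃ q : ℚ, (q : ℝ) = sInf T := by
  obtain ⟨r, hrT⟩ := hne
  have hr0 : 0 ≤ r := hpos r hrT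
  have hrh := (hT r).1 hrT
  have hMr : ((lbQ L : ℚ) : ℝ) ≤ r := lbQ_le hr0 hrh
  have hMT : ((lbQ L : ℚ) : ℝ) ∈ T := by
    rw [hT]
    intro e he
    rw [holds_single]
    rcases lt_trichotomy (e.c 0) 0 with hc | hc | hc
    · have h1 : e.d / e.c 0 ≤ lbQ L := div_le_lbQ he hc
      have h1R : ((e.d : ℝ)) / (e.c 0 : ℝ) ≤ ((lbQ L : ℚ) : ℝ) := by exact_mod_cast h1
      have hcR : ((e.c 0 : ℚ) : ℝ) < 0 := by exact_mod_cast hc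
      have h2 : (e.c 0 : ℝ) * ((lbQ L : ℚ) : ℝ) ≤ (e.c 0 : ℝ) * ((e.d : ℝ) / (e.c 0 : ℝ)) :=
        mul_le_mul_of_nonpos_left h1R (le_of_lt hcR)
      rw [mul_div_cancel₀ _ (ne_of_lt hcR)] at h2
      exact h2
    · have : ((e.c 0 : ℚ) : ℝ) = 0 := by exact_mod_cast hc
      rw [this, zero_mul]
      have := (holds_single e r).1 (hrh e he)
      rw [(by exact_mod_cast hc : ((e.c 0 : ℚ) : ℝ) = 0), zero_mul] at this
      exact this
    · have hcR : (0:ℝ) < ((e.c 0 : ℚ) : ℝ) := by exact_mod_cast hc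
      have := (holds_single e r).1 (hrh e he)
      calc (e.c 0 : ℝ) * ((lbQ L : ℚ) : ℝ) ≤ (e.c 0 : ℝ) * r :=
            mul_le_mul_of_nonneg_left hMr (le_of_lt hcR)
        _ ≤ (e.d : ℝ) := this
  refine ⟨lbQ L, le_antisymm ?_ (csInf_le ⟨((lbQ L : ℚ) : ℝ), ?_⟩ hMT)⟩
  · exact le_csInf ⟨_, hMT⟩ (fun s hs => lbQ_le (hpos s hs) ((hT s).1 hs))
  · exact fun s hs => lbQ_le (hpos s hs) ((hT s).1 hs)


variable {n : ℕ}

def g (α : Fin n → ℚ) (x : Fin n → ℝ) : ℝ := ∑ j, (α j : ℝ) * x j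

def mkR : Ineq (n + 1) := ⟨Fin.cons (-1) (fun _ => 0), 0⟩
def mkLo (m : ℤ) (α : Fin n → ℚ) : Ineq (n + 1) := ⟨Fin.cons 1 (fun j => -α j), m⟩
def mkHi (m : ℤ) (α : Fin n → ℚ) : Ineq (n + 1) := ⟨Fin.cons (-1) (fun j => α j), 1 - m⟩

noncomputable def sysL (Φ : Finset (Fin n → ℚ)) (m : (Fin n → ℚ) → ℤ) : List (Ineq (n + 1)) :=
  mkR :: (Φ.toList.map (fun α => mkLo (m α) α) ++ Φ.toList.map (fun α => mkHi (m α) α))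

lemma holds_cons (e : Ineq (n + 1)) (r : ℝ) (x : Fin n → ℝ) :
    e.holds (Fin.cons r x) ↔ (e.c 0 : ℝ) * r + ∑ j, (e.c j.succ : ℝ) * x j ≤ (e.d : ℝ) := by
  unfold Ineq.holds
  rw [Fin.sum_univ_succ]
  simp

lemma mkR_holds (r : ℝ) (x : Fin n → ℝ) : (mkR).holds (Fin.cons r x) ↔ 0 ≤ r := by
  rw [holds_cons]
  simp [mkR]

lemma mkLo_holds (m : ℤ) (α : Fin n → ℚ) (r : ℝ) (x : Fin n → ℝ) :
    (mkLo m α).holds (Fin.cons r x) ↔ r - (m : ℝ) ≤ g α x := by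
  rw [holds_cons]
  simp only [mkLo, Fin.cons_zero, Fin.cons_succ, g]
  push_cast
  have hs : (∑ j, -((α j : ℝ)) * x j) = -∑ j, (α j : ℝ) * x j := by
    rw [← Finset.sum_neg_distrib]
    exact Finset.sum_congr rfl fun j _ => neg_mul _ _
  rw [hs]
  constructor <;> intro h <;> linarith [h]

lemma mkHi_holds (m : ℤ) (α : Fin n → ℚ) (r : ℝ) (x : Fin n → ℝ) :
    (mkHi m α).holds (Fin.cons r x) ↔ g α x ≤ r - (m : ℝ) + 1 := by
  rw [holds_cons]
  simp only [mkHi, Fin.cons_zero, Fin.cons_succ, g]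
  push_cast
  constructor <;> intro h <;> linarith [h]

lemma sysL_iff (Φ : Finset (Fin n → ℚ)) (m : (Fin n → ℚ) → ℤ) (x : Fin n → ℝ) (r : ℝ) :
    (∀ e ∈ sysL Φ m, e.holds (Fin.cons r x)) ↔
      (0 ≤ r ∧ ∀ α ∈ Φ, r - (m α : ℝ) ≤ g α x ∧ g α x ≤ r - (m α : ℝ) + 1) := by
  constructor
  · intro h
    refine ⟨(mkR_holds r x).1 (h _ (by simp [sysL])), fun α hα => ?_⟩
    have hα' : α ∈ Φ.toList := by simpa using hα
    constructor
    · exact (mkLo_holds (m α) α r x).1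
        (h _ (by { simp only [sysL, List.mem_cons, List.mem_append, List.mem_map];
                   exact Or.inr (Or.inl ⟨α, hα', rfl⟩) }))
    · exact (mkHi_holds (m α) α r x).1
        (h _ (by { simp only [sysL, List.mem_cons, List.mem_append, List.mem_map];
                   exact Or.inr (Or.inr ⟨α, hα', rfl⟩) }))
  · rintro ⟨h0, h⟩ e he
    simp only [sysL, List.mem_cons, List.mem_append, List.mem_map] at he
    rcases he with rfl | ⟨α, hα, rfl⟩ | ⟨α, hα, rfl⟩
    · exact (mkR_holds r x).2 h0
    · exact (mkLo_holds (m α) α r x).2 (h α (by simpa using hα)).1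
    · exact (mkHi_holds (m α) α r x).2 (h α (by simpa using hα)).2

lemma gmix (α : Fin n → ℚ) (x₀ x : Fin n → ℝ) (t : ℝ) :
    g α (fun j => t * x₀ j + (1 - t) * x j) = t * g α x₀ + (1 - t) * g α x := by
  unfold g
  rw [Finset.mul_sum, Finset.mul_sum, ← Finset.sum_add_distrib]
  exact Finset.sum_congr rfl (fun j _ => by ring)

end MPaux


open MPaux in
/-- Let `Φ` be a finite subset of `ℚ^n`, viewed as linear functionals on
`ℝ^n` via the standard pairing `⟨α, x⟩ = ∑ j, α j * x j`. For `A ⊆ Φ × ℤ` let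
`S_A = {(x,r) : r ≥ 0 ∧ ∀ (α,i) ∈ Φ × ℤ, ⟨α,x⟩ + i > r ↔ (α,i) ∈ A}`. If `S_A` is
nonempty, then `inf {r | ∃ x, (x,r) ∈ S_A}` is a rational number. -/
theorem rational_infimum_of_moy_prasad_region (n : ℕ) (Φ : Finset (Fin n → ℚ))
    (A : Set ((Fin n → ℚ) × ℤ)) (hA : ∀ p ∈ A, p.1 ∈ Φ)
    (hne : {p : (Fin n → ℝ) × ℝ | 0 ≤ p.2 ∧ ∀ α ∈ Φ, ∀ i : ℤ,
        ((∑ j, (α j : ℝ) * p.1 j) + (i : ℝ) > p.2 ↔ (α, i) ∈ A)}.Nonempty) :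
    ∃ q : ℚ, (q : ℝ) =
      sInf {r : ℝ | ∃ x : Fin n → ℝ, 0 ≤ r ∧ ∀ α ∈ Φ, ∀ i : ℤ,
        ((∑ j, (α j : ℝ) * x j) + (i : ℝ) > r ↔ (α, i) ∈ A)} := by
  classical
  obtain ⟨⟨x₀, r₀⟩, hp⟩ := hne
  simp only [Set.mem_setOf_eq] at hp
  obtain ⟨hr₀0, h₀⟩ := hp
  set m : (Fin n → ℚ) → ℤ := fun α => ⌊r₀ - g α x₀⌋ + 1 with hm
  have hmdef : ∀ α, m α = ⌊r₀ - g α x₀⌋ + 1 := fun _ => rfl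
  have h₀' : ∀ α ∈ Φ, ∀ i : ℤ, (g α x₀ + (i : ℝ) > r₀ ↔ (α, i) ∈ A) :=
    fun α hα i => h₀ α hα i
  have hmem : ∀ α ∈ Φ, ∀ i : ℤ, ((α, i) ∈ A ↔ m α ≤ i) := by
    intro α hα i
    rw [← h₀' α hα i, hmdef α]
    constructor
    · intro hgt
      have h1 : r₀ - g α x₀ < (i : ℝ) := by linarith
      have h2 : ⌊r₀ - g α x₀⌋ < i := Int.floor_lt.2 h1
      omega
    · intro hle
      have h2 : ⌊r₀ - g α x₀⌋ < i := by omega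
      have h1 : r₀ - g α x₀ < (i : ℝ) := Int.floor_lt.1 h2
      linarith
  have hconstr : ∀ α ∈ Φ, ∀ (x : Fin n → ℝ) (r : ℝ),
      (∀ i : ℤ, (g α x + (i : ℝ) > r ↔ (α, i) ∈ A)) ↔
      (r - (m α : ℝ) < g α x ∧ g α x ≤ r - (m α : ℝ) + 1) := by
    intro α hα x r
    constructor
    · intro h
      constructor
      · have := (h (m α)).2 ((hmem α hα (m α)).2 le_rfl)
        linarith
      · have h2 : ¬ (g α x + ((m α - 1 : ℤ) : ℝ) > r) := by
          intro hgt
          have := (h (m α - 1)).1 hgt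
          rw [hmem α hα] at this
          omega
        push_neg at h2
        push_cast at h2
        linarith
    · rintro ⟨hlo, hhi⟩ i
      rw [hmem α hα i]
      constructor
      · intro hgt
        by_contra hni
        push_neg at hni
        have hle : (i : ℝ) ≤ (m α : ℝ) - 1 := by
          exact_mod_cast (by omega : (i : ℤ) ≤ m α - 1)
        linarith
      · intro hle
        have : ((m α : ℤ) : ℝ) ≤ (i : ℝ) := by exact_mod_cast hle
        linarith
  have hS₀ : ∀ α ∈ Φ, r₀ - (m α : ℝ) < g α x₀ ∧ g α x₀ ≤ r₀ - (m α : ℝ) + 1 :=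
    fun α hα => (hconstr α hα x₀ r₀).1 (h₀' α hα)
  set T : Set ℝ := {r | ∃ x : Fin n → ℝ, 0 ≤ r ∧ ∀ α ∈ Φ,
      (r - (m α : ℝ) < g α x ∧ g α x ≤ r - (m α : ℝ) + 1)} with hTdef
  set T' : Set ℝ := {r | ∃ x : Fin n → ℝ, 0 ≤ r ∧ ∀ α ∈ Φ,
      (r - (m α : ℝ) ≤ g α x ∧ g α x ≤ r - (m α : ℝ) + 1)} with hT'def
  have hGoalSet : {r : ℝ | ∃ x : Fin n → ℝ, 0 ≤ r ∧ ∀ α ∈ Φ, ∀ i : ℤ,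
        ((∑ j, (α j : ℝ) * x j) + (i : ℝ) > r ↔ (α, i) ∈ A)} = T := by
    ext r
    constructor
    · rintro ⟨x, h0, h⟩
      exact ⟨x, h0, fun α hα => (hconstr α hα x r).1 (h α hα)⟩
    · rintro ⟨x, h0, h⟩
      exact ⟨x, h0, fun α hα => (hconstr α hα x r).2 (h α hα)⟩
  have hTne : T.Nonempty := ⟨r₀, x₀, hr₀0, hS₀⟩
  have hsub : T ⊆ T' := by
    rintro r ⟨x, h0, h⟩
    exact ⟨x, h0, fun α hα => ⟨(h α hα).1.le, (h α hα).2⟩⟩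
  have hposT : ∀ r ∈ T, 0 ≤ r := by rintro r ⟨x, h0, _⟩; exact h0
  have hpos' : ∀ r ∈ T', 0 ≤ r := by rintro r ⟨x, h0, _⟩; exact h0
  have hbddT : BddBelow T := ⟨0, fun s hs => hposT s hs⟩
  have hcl : T' ⊆ closure T := by
    rintro r ⟨x, hr, hx⟩
    rw [Metric.mem_closure_iff]
    intro ε hε
    set d := |r₀ - r| with hd
    have hd0 : 0 ≤ d := abs_nonneg _
    set t := min 1 (ε / (d + 1)) with htdef
    have ht0 : 0 < t := lt_min one_pos (div_pos hε (by linarith))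
    have ht1 : t ≤ 1 := min_le_left _ _
    refine ⟨t * r₀ + (1 - t) * r, ⟨(fun j => t * x₀ j + (1 - t) * x j), ?_, ?_⟩, ?_⟩
    · nlinarith [mul_nonneg ht0.le hr₀0,
        mul_nonneg (by linarith : (0:ℝ) ≤ 1 - t) hr]
    · intro α hα
      rw [gmix]
      obtain ⟨hs1, hs2⟩ := hS₀ α hα
      obtain ⟨hp1, hp2⟩ := hx α hα
      constructor
      · nlinarith [mul_lt_mul_of_pos_left hs1 ht0,
          mul_le_mul_of_nonneg_left hp1 (by linarith : (0:ℝ) ≤ 1 - t)]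
      · nlinarith [mul_le_mul_of_nonneg_left hs2 ht0.le,
          mul_le_mul_of_nonneg_left hp2 (by linarith : (0:ℝ) ≤ 1 - t)]
    · have heq : r - (t * r₀ + (1 - t) * r) = t * (r - r₀) := by ring
      rw [Real.dist_eq, heq, abs_mul, abs_of_pos ht0, abs_sub_comm, ← hd]
      have h1 : t * d ≤ (ε / (d + 1)) * d :=
        mul_le_mul_of_nonneg_right (min_le_right _ _) hd0
      have h2 : (ε / (d + 1)) * d < ε := by
        rw [div_mul_eq_mul_div, div_lt_iff₀ (by linarith)]
        nlinarith
      linarith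
  have hInfEq : sInf T = sInf T' := by
    apply le_antisymm
    · refine le_csInf (hTne.mono hsub) (fun b hb => ?_)
      have hbc : b ∈ closure T := hcl hb
      have hsubc : closure T ⊆ Set.Ici (sInf T) :=
        closure_minimal (fun a ha => csInf_le hbddT ha) isClosed_Ici
      exact hsubc hbc
    · exact csInf_le_csInf ⟨0, fun s hs => hpos' s hs⟩ hTne hsub
  obtain ⟨L', hL'⟩ := MPaux.fm_exists n (sysL Φ m)
  have hiff : ∀ r : ℝ, r ∈ T' ↔ ∀ e ∈ L', e.holds ![r] := by
    intro r
    rw [hL' r]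
    constructor
    · rintro ⟨x, h0, h⟩
      exact ⟨Fin.cons r x, rfl, (sysL_iff Φ m x r).2 ⟨h0, h⟩⟩
    · rintro ⟨z, hz0, hz⟩
      have hzz := (sysL_iff Φ m (Fin.tail z) (z 0)).1
        (by rw [Fin.cons_self_tail]; exact hz)
      rw [hz0] at hzz
      exact ⟨Fin.tail z, hzz.1, hzz.2⟩
  obtain ⟨q, hq⟩ := MPaux.rat_sInf L' T' hiff (hTne.mono hsub) hpos'
  refine ⟨q, ?_⟩
  rw [hGoalSet, hInfEq]
  exact hq
end

section
/- Fix an additive map x : Q → ℝ and r ∈ ℝ. Then the set of subspaces { (𝔨_{x,r} ∩ 𝔨_{y,r}) + 𝔨_{x,r+} : y an additive map Q → ℝ } of 𝔤((t)) is finite. -/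
open HahnSeries

section Aux

open DFinsupp in
theorem biSup_inf_biSup_le_indep {R N ι : Type*} [Ring R] [AddCommGroup N] [Module R N]
    [DecidableEq ι] {G : ι → Submodule R N} (hind : iSupIndep G) (A B : Set ι) :
    (⨆ α ∈ A, G α) ⊓ (⨆ α ∈ B, G α) ≤ ⨆ α ∈ A ∩ B, G α := by
  classical
  intro v hv
  rw [Submodule.mem_inf] at hv
  obtain ⟨hA, hB⟩ := hv
  rw [Submodule.mem_biSup_iff_exists_dfinsupp] at hA hB ⊢
  obtain ⟨f, hf⟩ := hA
  obtain ⟨g, hg⟩ := hB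
  have hfg : f.filter (· ∈ A) = g.filter (· ∈ B) :=
    hind.dfinsupp_lsum_injective (hf.trans hg.symm)
  refine ⟨f.filter (· ∈ A), ?_⟩
  have : (f.filter (· ∈ A)).filter (· ∈ A ∩ B) = f.filter (· ∈ A) := by
    ext α
    simp only [DFinsupp.filter_apply]
    by_cases h : α ∈ A ∩ B
    · simp [h, h.1]
    · by_cases hA' : α ∈ A
      · have hB' : α ∉ B := fun hB' => h ⟨hA', hB'⟩
        have h2 := congrArg (fun h => h α) hfg
        simp only [DFinsupp.filter_apply] at h2
        rw [if_pos hA', if_neg hB'] at h2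
        simp [h, hA', h2]
      · simp [h, hA']
  rw [this]
  exact hf

variable {k : Type*} [Field k] {g : Type*} [LieRing g] [LieAlgebra k g]
    {Q : Type*} [AddCommGroup Q]

/-- A general "coefficientwise" submodule of the loop algebra. -/
noncomputable def MPgen (G : Q → Submodule k g) (P : ℤ → Set Q) :
    Submodule k (HahnSeries ℤ g) where
  carrier := {v | ∀ i : ℤ, v.coeff i ∈ ⨆ α ∈ P i, G α}
  zero_mem' := by intro i; simp
  add_mem' := by
    intro a b ha hb i
    rw [HahnSeries.coeff_add]
    exact add_mem (ha i) (hb i)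
  smul_mem' := by
    intro c a ha i
    rw [HahnSeries.coeff_smul]
    exact Submodule.smul_mem _ _ (ha i)

theorem mem_biSup_of_subset {R N ι : Type*} [Ring R] [AddCommGroup N] [Module R N]
    {f : ι → Submodule R N} {s t : Set ι} {x : N} (hx : x ∈ ⨆ i ∈ s, f i) (h : s ⊆ t) :
    x ∈ ⨆ i ∈ t, f i := by
  exact biSup_mono (f := f) h hx

theorem MPgen_union_le_sup (G : Q → Submodule k g) (P P' : ℤ → Set Q) :
    MPgen G (fun i => P i ∪ P' i) ≤ MPgen G P ⊔ MPgen G P' := by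
  intro v hv
  have hchoice : ∀ i : ℤ, ∃ c : g, c ∈ (⨆ α ∈ P i, G α) ∧
      v.coeff i - c ∈ (⨆ α ∈ P' i, G α) ∧ (v.coeff i = 0 → c = 0) := by
    intro i
    by_cases h0 : v.coeff i = 0
    · exact ⟨0, zero_mem _, by simp [h0], fun _ => rfl⟩
    · have hm := hv i
      rw [iSup_union] at hm
      obtain ⟨c, hc, d, hd, hcd⟩ := Submodule.mem_sup.mp hm
      exact ⟨c, hc, by rw [← hcd]; simpa using hd, fun h => absurd h h0⟩
  choose c hc1 hc2 hc3 using hchoice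
  have hsupp : Function.support c ⊆ v.support := by
    intro i hi
    by_contra h
    exact hi (hc3 i (by simpa [HahnSeries.mem_support, not_not] using h))
  set w : HahnSeries ℤ g := ⟨c, v.isPWO_support.mono hsupp⟩ with hw_def
  have hw : w ∈ MPgen G P := fun i => hc1 i
  have hu : v - w ∈ MPgen G P' := by
    intro i
    have hco : (v - w).coeff i = v.coeff i - c i := by
      rw [HahnSeries.coeff_sub]
    rw [hco]
    exact hc2 i
  have hveq : v = w + (v - w) := by abel
  rw [hveq]
  exact Submodule.add_mem_sup hw hu

end Aux

/-- Fix an additive `x : Q → ℝ` and `r ∈ ℝ`. The set of subspaces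
`(𝔨_{x,r} ∩ 𝔨_{y,r}) + 𝔨_{x,r+}` of `𝔤((t)) = HahnSeries ℤ 𝔤`, as `y` ranges over all
additive maps `Q → ℝ`, is finite. -/
theorem moy_prasad_intersections_finite
    {k : Type*} [Field k] {g : Type*} [LieRing g] [LieAlgebra k g]
    {Q : Type*} [AddCommGroup Q] [DecidableEq Q]
    (Φ : Finset Q) (hΦ : (0 : Q) ∉ Φ)
    (G : Q → Submodule k g)
    (hsupp : ∀ α : Q, α ∉ Φ → α ≠ 0 → G α = ⊥)
    (hdec : DirectSum.IsInternal G)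
    (hbr : ∀ (α β : Q) (a b : g), a ∈ G α → b ∈ G β → ⁅a, b⁆ ∈ G (α + β))
    (x : Q →+ ℝ) (r : ℝ) :
    {S : Submodule k (HahnSeries ℤ g) |
      ∃ y : Q →+ ℝ, S = (MP G x r ⊓ MP G y r) ⊔ MPplus G x r}.Finite := by
  classical
  set f : Finset Q → Submodule k (HahnSeries ℤ g) := fun T =>
    MPgen G (fun i => {α : Q | r < x α + i ∨ (r = x α + i ∧ α ∈ T)}) with hf_def
  have main : ∀ y : Q →+ ℝ,
      (MP G x r ⊓ MP G y r) ⊔ MPplus G x r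
        = f ((insert 0 Φ).filter (fun β => x β ≤ y β)) := by
    intro y
    set T : Finset Q := (insert 0 Φ).filter (fun β => x β ≤ y β) with hT_def
    apply le_antisymm
    · apply sup_le
      · intro v hv
        rw [Submodule.mem_inf] at hv
        intro i
        have h3 := biSup_inf_biSup_le_indep hdec.submodule_iSupIndep
          {α : Q | r ≤ x α + i} {α : Q | r ≤ y α + i}
          (Submodule.mem_inf.mpr ⟨hv.1 i, hv.2 i⟩)
        refine SetLike.le_def.mp ?_ h3
        apply iSup₂_le
        intro α hα
        obtain ⟨ha, hb⟩ := hα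
        rcases lt_or_eq_of_le (show r ≤ x α + (i : ℝ) from ha) with hlt | heq
        · exact le_biSup _ (Or.inl hlt)
        · by_cases hmem : α ∈ insert 0 Φ
          · have hxy : x α ≤ y α := by
              have h1 : x α + (i : ℝ) ≤ y α + i := by rw [← heq]; exact hb
              linarith
            exact le_biSup _ (Or.inr ⟨heq, Finset.mem_filter.mpr ⟨hmem, hxy⟩⟩)
          · have hbot : G α = ⊥ :=
              hsupp α (fun h => hmem (Finset.mem_insert_of_mem h))
                (fun h => hmem (by simp [h]))
            rw [hbot]
            exact bot_le
      · intro v hv i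
        exact mem_biSup_of_subset (hv i) (fun α h => Or.inl h)
    · have hset : (fun i : ℤ => {α : Q | r < x α + i ∨ (r = x α + i ∧ α ∈ T)})
          = fun i : ℤ => {α : Q | r = x α + i ∧ α ∈ T} ∪ {α : Q | r < x α + i} := by
        funext i
        ext α
        simp only [Set.mem_setOf_eq, Set.mem_union]
        tauto
      have h1 : f T ≤ MPgen G (fun i : ℤ => {α : Q | r = x α + i ∧ α ∈ T})
          ⊔ MPgen G (fun i : ℤ => {α : Q | r < x α + i}) := by
        rw [hf_def]
        simp only
        rw [hset]
        exact MPgen_union_le_sup G _ _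
      refine le_trans h1 (sup_le_sup ?_ ?_)
      · apply le_inf
        · intro v hv i
          exact mem_biSup_of_subset (hv i) (fun α hα => le_of_eq hα.1)
        · intro v hv i
          refine mem_biSup_of_subset (hv i) (fun α hα => ?_)
          obtain ⟨heq, hT⟩ := hα
          rw [hT_def, Finset.mem_filter] at hT
          have hxy : x α ≤ y α := hT.2
          show r ≤ y α + i
          rw [heq] at *
          linarith
      · intro v hv
        exact hv
  apply Set.Finite.subset (((insert 0 Φ).powerset).finite_toSet.image f)
  rintro S ⟨y, rfl⟩
  exact ⟨(insert 0 Φ).filter (fun β => x β ≤ y β),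
    Finset.mem_coe.mpr (Finset.mem_powerset.mpr (Finset.filter_subset _ _)), (main y).symm⟩
end

section
/- Let s, s' be rational numbers with s' ≥ s ≥ 1. Then [𝔟⁻[[t]]_{s'}, 𝔫((t))_s] ⊆ 𝔟⁻[[t]]_{s'} + 𝔫((t))_s; in particular 𝔟⁻[[t]]_{s'} + 𝔫((t))_s is a Lie subalgebra of 𝔤((t)). -/
set_option synthInstance.maxHeartbeats 1000000
set_option maxHeartbeats 2000000
set_option linter.unusedSectionVars false


open HahnSeries

section Whittaker

variable {k : Type*} [Field k] {g : Type*} [LieRing g] [LieAlgebra k g]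
variable {Q : Type*} [AddCommGroup Q]

/-- The subspace of `𝔤((t)) = HahnSeries ℤ 𝔤` of series whose `t^i`-coefficient lies in the
prescribed subspace `S i` of `𝔤`, for every `i`. -/
noncomputable def coeffSub (S : ℤ → Submodule k g) : Submodule k (HahnSeries ℤ g) where
  carrier := {v | ∀ i : ℤ, v.coeff i ∈ S i}
  zero_mem' := by intro i; simp
  add_mem' := by
    intro a b ha hb i
    rw [HahnSeries.coeff_add]; exact add_mem (ha i) (hb i)
  smul_mem' := by
    intro c a ha i
    rw [HahnSeries.coeff_smul]; exact Submodule.smul_mem _ _ (ha i)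

/-- `𝔫 = ⨁_{α ∈ Φ⁺} 𝔤_α` as a subspace of `𝔤`. -/
noncomputable def nilpos (G : Q → Submodule k g) (Φplus : Finset Q) : Submodule k g :=
  ⨆ α ∈ Φplus, G α

/-- `𝔟⁻ = 𝔥 ⊕ ⨁_{α ∈ −Φ⁺} 𝔤_α` as a subspace of `𝔤` (here `𝔥 = G 0`). -/
noncomputable def borelminus (G : Q → Submodule k g) (Φplus : Finset Q) : Submodule k g :=
  G 0 ⊔ ⨆ α ∈ Φplus, G (-α)

/-- `𝔫((t))` inside `HahnSeries ℤ 𝔤`. -/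
noncomputable def nLoop (G : Q → Submodule k g) (Φplus : Finset Q) :
    Submodule k (HahnSeries ℤ g) :=
  coeffSub fun _ => nilpos G Φplus

/-- `𝔫[[t]]` inside `HahnSeries ℤ 𝔤`. -/
noncomputable def nInt (G : Q → Submodule k g) (Φplus : Finset Q) :
    Submodule k (HahnSeries ℤ g) :=
  coeffSub fun i => if i < 0 then ⊥ else nilpos G Φplus

/-- `𝔟⁻[[t]]` inside `HahnSeries ℤ 𝔤`. -/
noncomputable def bInt (G : Q → Submodule k g) (Φplus : Finset Q) :
    Submodule k (HahnSeries ℤ g) :=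
  coeffSub fun i => if i < 0 then ⊥ else borelminus G Φplus

/-- The additive map `α ↦ s · ht(α) : Q → ℝ`. -/
noncomputable def sht (ht : Q →+ ℤ) (s : ℚ) : Q →+ ℝ where
  toFun α := (s : ℝ) * (ht α : ℝ)
  map_zero' := by simp
  map_add' a b := by push_cast [map_add]; ring

/-- `𝔟⁻[[t]]_s = 𝔨_{s·ht,(s−1)+} ∩ 𝔟⁻[[t]]`. -/
noncomputable def bIntS (G : Q → Submodule k g) (Φplus : Finset Q) (ht : Q →+ ℤ) (s : ℚ) :
    Submodule k (HahnSeries ℤ g) :=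
  MPplus G (sht ht s) ((s : ℝ) - 1) ⊓ bInt G Φplus

/-- `𝔫((t))_s = 𝔨_{s·ht,0} ∩ 𝔫((t))`. -/
noncomputable def nLoopS (G : Q → Submodule k g) (Φplus : Finset Q) (ht : Q →+ ℤ) (s : ℚ) :
    Submodule k (HahnSeries ℤ g) :=
  MP G (sht ht s) 0 ⊓ nLoop G Φplus

end Whittaker


section AuxProofs

variable {k : Type*} [Field k] {g : Type*} [LieRing g] [LieAlgebra k g]
variable {Q : Type*} [AddCommGroup Q] [DecidableEq Q]

lemma mem_MP_iff {G : Q → Submodule k g} {x : Q →+ ℝ} {r : ℝ} {v : HahnSeries ℤ g} :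
    v ∈ MP G x r ↔ ∀ i : ℤ, v.coeff i ∈ ⨆ α ∈ {α : Q | r ≤ x α + i}, G α := Iff.rfl

lemma mem_MPplus_iff {G : Q → Submodule k g} {x : Q →+ ℝ} {r : ℝ} {v : HahnSeries ℤ g} :
    v ∈ MPplus G x r ↔ ∀ i : ℤ, v.coeff i ∈ ⨆ α ∈ {α : Q | r < x α + i}, G α := Iff.rfl

lemma mem_coeffSub_iff {S : ℤ → Submodule k g} {v : HahnSeries ℤ g} :
    v ∈ coeffSub S ↔ ∀ i : ℤ, v.coeff i ∈ S i := Iff.rfl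

@[simp] lemma sht_apply (ht : Q →+ ℤ) (s : ℚ) (α : Q) :
    sht ht s α = (s : ℝ) * (ht α : ℝ) := rfl

lemma biSup_induction_set (G : Q → Submodule k g) (A : Set Q) {C : g → Prop} {x : g}
    (hx : x ∈ ⨆ α ∈ A, G α) (mem : ∀ α ∈ A, ∀ y ∈ G α, C y) (h0 : C 0)
    (hadd : ∀ y z, C y → C z → C (y + z)) : C x := by
  have hx' : x ∈ ⨆ α : A, G (α : Q) := by
    rwa [iSup_subtype'] at hx
  exact Submodule.iSup_induction (motive := C) (fun α : A => G (α : Q)) hx'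
    (fun i y hy => mem i i.2 y hy) h0 hadd

lemma mem_biSup_iff_dfinsupp (G : Q → Submodule k g) (A : Set Q) (x : g) :
    x ∈ (⨆ α ∈ A, G α) ↔
      ∃ F : DirectSum Q fun γ => G γ, (∀ γ, γ ∉ A → F γ = 0) ∧
        DirectSum.coeAddMonoidHom G F = x := by
  classical
  constructor
  · intro hx
    refine biSup_induction_set G A hx
      (C := fun x => ∃ F : DirectSum Q fun γ => G γ, (∀ γ, γ ∉ A → F γ = 0) ∧
        DirectSum.coeAddMonoidHom G F = x) ?_ ?_ ?_
    · intro α hα y hy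
      refine ⟨DirectSum.of (fun γ => (G γ : Submodule k g)) α ⟨y, hy⟩, ?_,
        DirectSum.coeAddMonoidHom_of _ _ _⟩
      intro γ hγ
      exact DirectSum.of_eq_of_ne _ _ _ (fun h => hγ (h ▸ hα))
    · exact ⟨0, fun _ _ => rfl, map_zero _⟩
    · rintro y z ⟨F1, h1, e1⟩ ⟨F2, h2, e2⟩
      exact ⟨F1 + F2, fun γ hγ => by
        rw [DirectSum.add_apply, h1 γ hγ, h2 γ hγ, add_zero],
        by rw [map_add, e1, e2]⟩
  · rintro ⟨F, hF, rfl⟩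
    rw [DirectSum.coeAddMonoidHom_eq_dfinsuppSum, DFinsupp.sum]
    refine Submodule.sum_mem _ fun γ hγ => ?_
    have hγA : γ ∈ A := by
      by_contra h
      exact (DFinsupp.mem_support_iff.mp hγ) (hF γ h)
    have hle : G γ ≤ ⨆ α ∈ A, G α := le_iSup₂ (f := fun α (_ : α ∈ A) => G α) γ hγA
    exact hle (F γ).2

lemma mem_biSup_inter (G : Q → Submodule k g) (hdec : DirectSum.IsInternal G)
    (A B : Set Q) {x : g} (hA : x ∈ ⨆ α ∈ A, G α) (hB : x ∈ ⨆ α ∈ B, G α) :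
    x ∈ ⨆ α ∈ A ∩ B, G α := by
  obtain ⟨F1, h1, e1⟩ := (mem_biSup_iff_dfinsupp G A x).mp hA
  obtain ⟨F2, h2, e2⟩ := (mem_biSup_iff_dfinsupp G B x).mp hB
  have hFF : F1 = F2 := hdec.injective (e1.trans e2.symm)
  refine (mem_biSup_iff_dfinsupp G (A ∩ B) x).mpr ⟨F1, fun γ hγ => ?_, e1⟩
  rcases (not_and_or.mp hγ : γ ∉ A ∨ γ ∉ B) with h | h
  · exact h1 γ h
  · exact hFF ▸ h2 γ h

lemma mul_coeff_mem (G : Q → Submodule k g)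
    (hbr : ∀ (α β : Q) (a b : g), a ∈ G α → b ∈ G β → ⁅a, b⁆ ∈ G (α + β))
    (v w : HahnSeries ℤ g) (Cv Cw : ℤ → Set Q) (S : ℤ → Submodule k g)
    (hv : ∀ i, v.coeff i ∈ ⨆ α ∈ Cv i, G α) (hw : ∀ j, w.coeff j ∈ ⨆ β ∈ Cw j, G β)
    (key : ∀ i j : ℤ, ∀ α ∈ Cv i, ∀ β ∈ Cw j, G (α + β) ≤ S (i + j)) (n : ℤ) :
    (v * w).coeff n ∈ S n := by
  rw [HahnSeries.coeff_mul]
  refine Submodule.sum_mem _ fun ij hij => ?_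
  obtain ⟨-, -, hsum⟩ := Finset.mem_addAntidiagonal.mp hij
  rw [← hsum]
  refine biSup_induction_set G (Cv ij.1) (hv ij.1)
    (C := fun x => x * w.coeff ij.2 ∈ S (ij.1 + ij.2)) ?_ ?_ ?_
  · intro α hα a ha
    refine biSup_induction_set G (Cw ij.2) (hw ij.2)
      (C := fun y => a * y ∈ S (ij.1 + ij.2)) ?_ ?_ ?_
    · intro β hβ b hb
      exact key ij.1 ij.2 α hα β hβ (hbr α β a b ha hb)
    · show a * (0 : g) ∈ S (ij.1 + ij.2)
      rw [mul_zero]; exact Submodule.zero_mem _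
    · intro y z hy hz
      show a * (y + z) ∈ S (ij.1 + ij.2)
      rw [mul_add]; exact Submodule.add_mem _ hy hz
  · show (0 : g) * w.coeff ij.2 ∈ S (ij.1 + ij.2)
    rw [zero_mul]; exact Submodule.zero_mem _
  · intro y z hy hz
    show (y + z) * w.coeff ij.2 ∈ S (ij.1 + ij.2)
    rw [add_mul]; exact Submodule.add_mem _ hy hz

lemma exists_split (u : HahnSeries ℤ g) (S T : ℤ → Submodule k g)
    (h : ∀ n, u.coeff n ∈ S n ⊔ T n) :
    ∃ P : HahnSeries ℤ g, (∀ n, P.coeff n ∈ S n) ∧ (∀ n, (u - P).coeff n ∈ T n) := by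
  classical
  choose y hy z hz hyz using fun n => Submodule.mem_sup.mp (h n)
  set f : ℤ → g := fun n => if u.coeff n = 0 then 0 else y n with hf
  have hsupp : Function.support f ⊆ Function.support u.coeff := by
    intro n hn
    simp only [Function.mem_support, ne_eq] at hn ⊢
    intro h0
    exact hn (by simp [hf, h0])
  refine ⟨⟨f, u.isPWO_support.mono hsupp⟩, fun n => ?_, fun n => ?_⟩
  · show f n ∈ S n
    by_cases h0 : u.coeff n = 0
    · simp only [hf, if_pos h0]
      exact Submodule.zero_mem _
    · simpa only [hf, if_neg h0] using hy n
  · rw [HahnSeries.coeff_sub]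
    show u.coeff n - f n ∈ T n
    by_cases h0 : u.coeff n = 0
    · simp only [hf, if_pos h0, sub_zero, h0]
      exact Submodule.zero_mem _
    · simp only [hf, if_neg h0]
      have hz' : u.coeff n - y n = z n := by rw [← hyz n]; abel
      rw [hz']
      exact hz n

/-- The index set for coefficients of `𝔟⁻[[t]]_{s'}`. -/
def AbSet (Φplus : Finset Q) (ht : Q →+ ℤ) (s' : ℚ) (i : ℤ) : Set Q :=
  {α | ((s' : ℝ) - 1 < (s' : ℝ) * (ht α : ℝ) + (i : ℝ)) ∧ (0 : ℤ) ≤ i ∧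
    (α = 0 ∨ -α ∈ Φplus)}

/-- The index set for coefficients of `𝔫((t))_s`. -/
def AnSet (Φplus : Finset Q) (ht : Q →+ ℤ) (s : ℚ) (j : ℤ) : Set Q :=
  {β | (0 : ℝ) ≤ (s : ℝ) * (ht β : ℝ) + (j : ℝ) ∧ β ∈ Φplus}

/-- Target coefficient submodules for the `𝔟⁻`-part. -/
noncomputable def SBmod (G : Q → Submodule k g) (Φplus : Finset Q) (ht : Q →+ ℤ) (s' : ℚ)
    (n : ℤ) : Submodule k g :=
  ⨆ α ∈ AbSet Φplus ht s' n, G α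

/-- Target coefficient submodules for the `𝔫`-part. -/
noncomputable def SNmod (G : Q → Submodule k g) (Φplus : Finset Q) (ht : Q →+ ℤ) (s : ℚ)
    (n : ℤ) : Submodule k g :=
  ⨆ β ∈ AnSet Φplus ht s n, G β

end AuxProofs

/-- For rationals `s' ≥ s ≥ 1`, one has
`[𝔟⁻[[t]]_{s'}, 𝔫((t))_s] ⊆ 𝔟⁻[[t]]_{s'} + 𝔫((t))_s` in `𝔤((t)) = HahnSeries ℤ 𝔤`
(bracket = the multiplication `v * w`); in particular `𝔟⁻[[t]]_{s'} + 𝔫((t))_s` is a Lie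
subalgebra of `𝔤((t))`. -/
theorem borel_nilpotent_sum_subalgebra
    {k : Type*} [Field k] {g : Type*} [LieRing g] [LieAlgebra k g]
    {Q : Type*} [AddCommGroup Q] [DecidableEq Q]
    (Φplus : Finset Q) (hΦplus : (0 : Q) ∉ Φplus)
    (Φ : Finset Q) (hΦ : ∀ α : Q, α ∈ Φ ↔ (α ∈ Φplus ∨ -α ∈ Φplus))
    (hdisj : ∀ α ∈ Φplus, -α ∉ Φplus)
    (G : Q → Submodule k g)
    (hsupp : ∀ α : Q, α ∉ Φ → α ≠ 0 → G α = ⊥)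
    (hdec : DirectSum.IsInternal G)
    (hbr : ∀ (α β : Q) (a b : g), a ∈ G α → b ∈ G β → ⁅a, b⁆ ∈ G (α + β))
    (ht : Q →+ ℤ) (hht : ∀ α ∈ Φplus, 1 ≤ ht α)
    (s s' : ℚ) (hs : 1 ≤ s) (hss' : s ≤ s') :
    (∀ v ∈ bIntS G Φplus ht s', ∀ w ∈ nLoopS G Φplus ht s,
        v * w ∈ bIntS G Φplus ht s' ⊔ nLoopS G Φplus ht s) ∧
    (∀ v ∈ bIntS G Φplus ht s' ⊔ nLoopS G Φplus ht s,
      ∀ w ∈ bIntS G Φplus ht s' ⊔ nLoopS G Φplus ht s,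
        v * w ∈ bIntS G Φplus ht s' ⊔ nLoopS G Φplus ht s) := by
  classical
  have hs1 : (1:ℝ) ≤ (s:ℝ) := by exact_mod_cast hs
  have hss : (s:ℝ) ≤ (s':ℝ) := by exact_mod_cast hss'
  have hs'1 : (1:ℝ) ≤ (s':ℝ) := le_trans hs1 hss
  have htneg : ∀ α : Q, (α = 0 ∨ -α ∈ Φplus) → ht α ≤ 0 := by
    rintro α (rfl | hm)
    · simp
    · have := hht _ hm; rw [map_neg] at this; omega
  -- coefficient extraction
  have coeffB : ∀ v ∈ bIntS G Φplus ht s', ∀ i : ℤ,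
      v.coeff i ∈ ⨆ α ∈ AbSet Φplus ht s' i, G α := by
    intro v hv i
    obtain ⟨h1, h2⟩ := Submodule.mem_inf.mp hv
    have h1i := mem_MPplus_iff.mp h1 i
    have h2i := mem_coeffSub_iff.mp h2 i
    by_cases hi : i < 0
    · rw [if_pos hi, Submodule.mem_bot] at h2i
      rw [h2i]; exact Submodule.zero_mem _
    · rw [if_neg hi] at h2i
      have hle : borelminus G Φplus ≤ ⨆ α ∈ {α : Q | α = 0 ∨ -α ∈ Φplus}, G α := by
        refine sup_le ?_ ?_
        · exact le_iSup₂ (f := fun α (_ : α ∈ {α : Q | α = 0 ∨ -α ∈ Φplus}) => G α)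
            0 (Or.inl rfl)
        · refine iSup₂_le fun α hα => ?_
          have := le_iSup₂ (f := fun β (_ : β ∈ {α : Q | α = 0 ∨ -α ∈ Φplus}) => G β)
            (-α) (Or.inr (by rwa [neg_neg]))
          exact this
      have hint := mem_biSup_inter G hdec _ _ h1i (hle h2i)
      have hmono : (⨆ α ∈ ({α : Q | ((s':ℝ) - 1) < sht ht s' α + i} ∩
          {α : Q | α = 0 ∨ -α ∈ Φplus}), G α) ≤ ⨆ α ∈ AbSet Φplus ht s' i, G α :=
        biSup_mono fun α hα => ⟨hα.1, le_of_not_gt hi, hα.2⟩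
      exact hmono hint
  have coeffN : ∀ w ∈ nLoopS G Φplus ht s, ∀ j : ℤ,
      w.coeff j ∈ ⨆ β ∈ AnSet Φplus ht s j, G β := by
    intro w hw j
    obtain ⟨h1, h2⟩ := Submodule.mem_inf.mp hw
    have h1j := mem_MP_iff.mp h1 j
    have h2j : w.coeff j ∈ ⨆ β ∈ {β : Q | β ∈ Φplus}, G β :=
      mem_coeffSub_iff.mp h2 j
    have hint := mem_biSup_inter G hdec _ _ h1j h2j
    have hmono : (⨆ β ∈ ({β : Q | (0:ℝ) ≤ sht ht s β + j} ∩
        {β : Q | β ∈ Φplus}), G β) ≤ ⨆ β ∈ AnSet Φplus ht s j, G β :=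
      biSup_mono fun β hβ => ⟨hβ.1, hβ.2⟩
    exact hmono hint
  -- target membership
  have memB : ∀ u : HahnSeries ℤ g, (∀ n, u.coeff n ∈ SBmod G Φplus ht s' n) →
      u ∈ bIntS G Φplus ht s' := by
    intro u hu
    refine Submodule.mem_inf.mpr ⟨mem_MPplus_iff.mpr fun i => ?_, mem_coeffSub_iff.mpr fun i => ?_⟩
    · have hmono : SBmod G Φplus ht s' i ≤
          ⨆ α ∈ {α : Q | ((s':ℝ) - 1) < sht ht s' α + i}, G α :=
        biSup_mono fun α hα => hα.1
      exact hmono (hu i)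
    · by_cases hi : i < 0
      · rw [if_pos hi]
        have hle : SBmod G Φplus ht s' i ≤ ⊥ :=
          iSup₂_le fun α hα => absurd hα.2.1 (by omega)
        exact hle (hu i)
      · rw [if_neg hi]
        have hle : SBmod G Φplus ht s' i ≤ borelminus G Φplus := by
          refine iSup₂_le fun α hα => ?_
          rcases hα.2.2 with h0 | hm
          · rw [h0]; exact le_sup_left
          · refine le_trans ?_ le_sup_right
            have := le_iSup₂ (f := fun δ (_ : δ ∈ Φplus) => G (-δ)) (-α) hm
            rwa [neg_neg] at this
        exact hle (hu i)
  have memN : ∀ u : HahnSeries ℤ g, (∀ n, u.coeff n ∈ SNmod G Φplus ht s n) →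
      u ∈ nLoopS G Φplus ht s := by
    intro u hu
    refine Submodule.mem_inf.mpr ⟨mem_MP_iff.mpr fun i => ?_, mem_coeffSub_iff.mpr fun i => ?_⟩
    · have hmono : SNmod G Φplus ht s i ≤
          ⨆ β ∈ {β : Q | (0:ℝ) ≤ sht ht s β + i}, G β :=
        biSup_mono fun β hβ => hβ.1
      exact hmono (hu i)
    · have hle : SNmod G Φplus ht s i ≤ nilpos G Φplus :=
        iSup₂_le fun β hβ => le_iSup₂ (f := fun β (_ : β ∈ Φplus) => G β) β hβ.2
      exact hle (hu i)
  -- key combinatorial lemmas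
  have keyBN : ∀ (i j : ℤ) (α β : Q), α ∈ AbSet Φplus ht s' i → β ∈ AnSet Φplus ht s j →
      G (α + β) ≤ SBmod G Φplus ht s' (i + j) ⊔ SNmod G Φplus ht s (i + j) := by
    rintro i j α β ⟨hα1, hα2, hα3⟩ ⟨hβ1, hβ2⟩
    have hbβ : (1:ℝ) ≤ (ht β : ℝ) := by exact_mod_cast hht β hβ2
    have haα : (ht α : ℝ) ≤ 0 := by exact_mod_cast htneg α hα3
    have hi0 : (0:ℝ) ≤ (i:ℝ) := by exact_mod_cast hα2
    by_cases hP : α + β ∈ Φplus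
    · refine le_trans ?_ le_sup_right
      refine le_iSup₂ (f := fun γ (_ : γ ∈ AnSet Φplus ht s (i+j)) => G γ) (α + β) ?_
      refine ⟨?_, hP⟩
      have h4 : (0:ℝ) ≤ (s:ℝ) * (ht α : ℝ) + i := by
        rcases hα3 with rfl | hm
        · simpa using hi0
        · have ham : (ht α : ℝ) ≤ -1 := by
            have := hht _ hm; rw [map_neg] at this
            exact_mod_cast (by omega : ht α ≤ -1)
          nlinarith [hα1, mul_nonneg (by linarith : (0:ℝ) ≤ (s':ℝ) - s)
            (by linarith : (0:ℝ) ≤ -(ht α : ℝ))]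
      rw [map_add]; push_cast
      nlinarith [hβ1, h4]
    · by_cases hB : α + β = 0 ∨ -(α + β) ∈ Φplus
      · refine le_trans ?_ le_sup_left
        have hab : (ht (α + β) : ℝ) ≤ 0 := by exact_mod_cast htneg _ hB
        have h5 : (0:ℝ) ≤ (s':ℝ) * (ht β : ℝ) + j := by
          nlinarith [hβ1, mul_nonneg (by linarith : (0:ℝ) ≤ (s':ℝ) - s)
            (by linarith : (0:ℝ) ≤ (ht β : ℝ))]
        have h6 : (s':ℝ) - 1 < (s':ℝ) * (ht (α + β) : ℝ) + ((i:ℝ) + (j:ℝ)) := by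
          rw [map_add]; push_cast
          nlinarith [hα1, h5]
        have h7 : (0:ℤ) ≤ i + j := by
          have : (0:ℝ) < (i:ℝ) + (j:ℝ) := by
            nlinarith [h6, mul_nonneg (by linarith : (0:ℝ) ≤ (s':ℝ))
              (by linarith : (0:ℝ) ≤ -((ht (α + β)) : ℝ))]
          exact_mod_cast this.le
        refine le_iSup₂ (f := fun γ (_ : γ ∈ AbSet Φplus ht s' (i+j)) => G γ) (α + β) ?_
        refine ⟨by push_cast; exact h6, h7, hB⟩
      · push_neg at hB
        rw [hsupp (α + β) (by rw [hΦ]; push_neg; exact ⟨hP, hB.2⟩) hB.1]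
        exact bot_le
  have keyNB : ∀ (i j : ℤ) (α β : Q), α ∈ AnSet Φplus ht s i → β ∈ AbSet Φplus ht s' j →
      G (α + β) ≤ SBmod G Φplus ht s' (i + j) ⊔ SNmod G Φplus ht s (i + j) := by
    intro i j α β hα hβ
    have := keyBN j i β α hβ hα
    rwa [add_comm β α, add_comm j i] at this
  have keyBB : ∀ (i j : ℤ) (α β : Q), α ∈ AbSet Φplus ht s' i → β ∈ AbSet Φplus ht s' j →
      G (α + β) ≤ SBmod G Φplus ht s' (i + j) := by
    rintro i j α β ⟨hα1, hα2, hα3⟩ ⟨hβ1, hβ2, hβ3⟩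
    by_cases hB : α + β = 0 ∨ -(α + β) ∈ Φplus
    · refine le_iSup₂ (f := fun γ (_ : γ ∈ AbSet Φplus ht s' (i+j)) => G γ) (α + β) ?_
      refine ⟨?_, by omega, hB⟩
      rw [map_add]; push_cast
      nlinarith [hα1, hβ1, hs'1]
    · by_cases hP : α + β ∈ Φplus
      · exfalso
        have h1 := hht _ hP
        have h2 := htneg α hα3
        have h3 := htneg β hβ3
        rw [map_add] at h1; omega
      · push_neg at hB
        rw [hsupp (α + β) (by rw [hΦ]; push_neg; exact ⟨hP, hB.2⟩) hB.1]
        exact bot_le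
  have keyNN : ∀ (i j : ℤ) (α β : Q), α ∈ AnSet Φplus ht s i → β ∈ AnSet Φplus ht s j →
      G (α + β) ≤ SNmod G Φplus ht s (i + j) := by
    rintro i j α β ⟨hα1, hα2⟩ ⟨hβ1, hβ2⟩
    by_cases hP : α + β ∈ Φplus
    · refine le_iSup₂ (f := fun γ (_ : γ ∈ AnSet Φplus ht s (i+j)) => G γ) (α + β) ?_
      refine ⟨?_, hP⟩
      rw [map_add]; push_cast
      linarith [hα1, hβ1]
    · have ha := hht _ hα2
      have hb := hht _ hβ2
      have hne : α + β ≠ 0 := fun h => by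
        have h0 : ht (α + β) = 0 := by rw [h, map_zero]
        rw [map_add] at h0; omega
      have hm : -(α + β) ∉ Φplus := fun h => by
        have := hht _ h; rw [map_neg, map_add] at this; omega
      rw [hsupp (α + β) (by rw [hΦ]; push_neg; exact ⟨hP, hm⟩) hne]
      exact bot_le
  -- the four product rules
  have prodBN : ∀ v ∈ bIntS G Φplus ht s', ∀ w ∈ nLoopS G Φplus ht s,
      v * w ∈ bIntS G Φplus ht s' ⊔ nLoopS G Φplus ht s := by
    intro v hv w hw
    have hc : ∀ n, (v * w).coeff n ∈ SBmod G Φplus ht s' n ⊔ SNmod G Φplus ht s n :=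
      mul_coeff_mem G hbr v w (AbSet Φplus ht s') (AnSet Φplus ht s)
        (fun n => SBmod G Φplus ht s' n ⊔ SNmod G Φplus ht s n)
        (coeffB v hv) (coeffN w hw)
        (fun i j α hα β hβ => keyBN i j α β hα hβ)
    obtain ⟨P, hP, hQ⟩ := exists_split (v * w) _ _ hc
    have h1 : P ∈ bIntS G Φplus ht s' := memB P hP
    have h2 : v * w - P ∈ nLoopS G Φplus ht s := memN _ hQ
    have he : v * w = P + (v * w - P) := by abel
    rw [he]
    exact Submodule.add_mem _ (Submodule.mem_sup_left h1) (Submodule.mem_sup_right h2)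
  have prodNB : ∀ v ∈ nLoopS G Φplus ht s, ∀ w ∈ bIntS G Φplus ht s',
      v * w ∈ bIntS G Φplus ht s' ⊔ nLoopS G Φplus ht s := by
    intro v hv w hw
    have hc : ∀ n, (v * w).coeff n ∈ SBmod G Φplus ht s' n ⊔ SNmod G Φplus ht s n :=
      mul_coeff_mem G hbr v w (AnSet Φplus ht s) (AbSet Φplus ht s')
        (fun n => SBmod G Φplus ht s' n ⊔ SNmod G Φplus ht s n)
        (coeffN v hv) (coeffB w hw)
        (fun i j α hα β hβ => keyNB i j α β hα hβ)
    obtain ⟨P, hP, hQ⟩ := exists_split (v * w) _ _ hc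
    have h1 : P ∈ bIntS G Φplus ht s' := memB P hP
    have h2 : v * w - P ∈ nLoopS G Φplus ht s := memN _ hQ
    have he : v * w = P + (v * w - P) := by abel
    rw [he]
    exact Submodule.add_mem _ (Submodule.mem_sup_left h1) (Submodule.mem_sup_right h2)
  have prodBB : ∀ v ∈ bIntS G Φplus ht s', ∀ w ∈ bIntS G Φplus ht s',
      v * w ∈ bIntS G Φplus ht s' := by
    intro v hv w hw
    exact memB _ (mul_coeff_mem G hbr v w _ _ (SBmod G Φplus ht s')
      (coeffB v hv) (coeffB w hw) (fun i j α hα β hβ => keyBB i j α β hα hβ))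
  have prodNN : ∀ v ∈ nLoopS G Φplus ht s, ∀ w ∈ nLoopS G Φplus ht s,
      v * w ∈ nLoopS G Φplus ht s := by
    intro v hv w hw
    exact memN _ (mul_coeff_mem G hbr v w _ _ (SNmod G Φplus ht s)
      (coeffN v hv) (coeffN w hw) (fun i j α hα β hβ => keyNN i j α β hα hβ))
  refine ⟨prodBN, ?_⟩
  intro v hv w hw
  obtain ⟨v1, hv1, v2, hv2, rfl⟩ := Submodule.mem_sup.mp hv
  obtain ⟨w1, hw1, w2, hw2, rfl⟩ := Submodule.mem_sup.mp hw
  rw [add_mul, mul_add, mul_add]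
  refine Submodule.add_mem _ (Submodule.add_mem _ ?_ ?_) (Submodule.add_mem _ ?_ ?_)
  · exact Submodule.mem_sup_left (prodBB v1 hv1 w1 hw1)
  · exact prodBN v1 hv1 w2 hw2
  · exact prodNB v2 hv2 w1 hw1
  · exact Submodule.mem_sup_right (prodNN v2 hv2 w2 hw2)
end
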